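/- arXiv:2507.20634 — 3 statements merged into one kernel-verified Lean document; each statement's English description precedes it below -/
import Mathlib

section
/- Consider the MNN system of ODEs: for each i ∈ {1,…,n}, C_i v̇_i = −(G_i+G_{ai}) v_i − q̂'_i(φˢ_i) v_i + Σ_{j ∈ C_i} q̂'_{ij}(φ_{ij}) v_j, φ̇ˢ_i = v_i, and φ̇_{ij} = v_j for j ∈ C_i, where C_i > 0 and each q̂ is C¹. Then for each i, the function Q_i(v, φˢ, φ) = C_i v_i + (G_i+G_{ai}) φˢ_i + q̂_i(φˢ_i) − Σ_{j ∈ C_i} q̂_{ij}(φ_{ij}) is constant along every solution of the system. -/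
theorem stmt_1 (n : ℕ) (C G Ga : Fin n → ℝ) (hC : ∀ i, 0 < C i)
    (Cset : Fin n → Finset (Fin n)) (hCset : ∀ i, i ∉ Cset i)
    (qs : Fin n → ℝ → ℝ) (qc : Fin n → Fin n → ℝ → ℝ)
    (hqs : ∀ i, ContDiff ℝ 1 (qs i)) (hqc : ∀ i j, ContDiff ℝ 1 (qc i j))
    (v φs : ℝ → Fin n → ℝ) (φ : ℝ → Fin n → Fin n → ℝ)
    (hv : ∀ t i, HasDerivAt (fun t => v t i)
      ((1 / C i) * (-(G i + Ga i) * v t i - deriv (qs i) (φs t i) * v t i +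
        ∑ j ∈ Cset i, deriv (qc i j) (φ t i j) * v t j)) t)
    (hφs : ∀ t i, HasDerivAt (fun t => φs t i) (v t i) t)
    (hφ : ∀ t i, ∀ j ∈ Cset i, HasDerivAt (fun t => φ t i j) (v t j) t) :
    ∀ i, ∀ t₁ t₂ : ℝ,
      C i * v t₁ i + (G i + Ga i) * φs t₁ i + qs i (φs t₁ i) -
        ∑ j ∈ Cset i, qc i j (φ t₁ i j) =
      C i * v t₂ i + (G i + Ga i) * φs t₂ i + qs i (φs t₂ i) -
        ∑ j ∈ Cset i, qc i j (φ t₂ i j) := by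
  intro i t₁ t₂
  set F : ℝ → ℝ := fun t =>
    C i * v t i + (G i + Ga i) * φs t i + qs i (φs t i) -
      ∑ j ∈ Cset i, qc i j (φ t i j) with hF
  have key : ∀ t, HasDerivAt F 0 t := by
    intro t
    have h1 : HasDerivAt (fun t => C i * v t i)
        (-(G i + Ga i) * v t i - deriv (qs i) (φs t i) * v t i +
          ∑ j ∈ Cset i, deriv (qc i j) (φ t i j) * v t j) t := by
      have := (hv t i).const_mul (C i)
      have hC' : C i ≠ 0 := (hC i).ne'
      rw [show C i * ((1 / C i) * (-(G i + Ga i) * v t i - deriv (qs i) (φs t i) * v t i +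
          ∑ j ∈ Cset i, deriv (qc i j) (φ t i j) * v t j)) =
          (-(G i + Ga i) * v t i - deriv (qs i) (φs t i) * v t i +
          ∑ j ∈ Cset i, deriv (qc i j) (φ t i j) * v t j) by field_simp] at this
      exact this
    have h2 : HasDerivAt (fun t => (G i + Ga i) * φs t i) ((G i + Ga i) * v t i) t :=
      (hφs t i).const_mul _
    have h3 : HasDerivAt (fun t => qs i (φs t i)) (deriv (qs i) (φs t i) * v t i) t := by
      have hd : HasDerivAt (qs i) (deriv (qs i) (φs t i)) (φs t i) :=
        (((hqs i).differentiable one_ne_zero) (φs t i)).hasDerivAt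
      exact hd.comp t (hφs t i)
    have h4 : HasDerivAt (fun t => ∑ j ∈ Cset i, qc i j (φ t i j))
        (∑ j ∈ Cset i, deriv (qc i j) (φ t i j) * v t j) t := by
      apply HasDerivAt.fun_sum
      intro j hj
      have hd : HasDerivAt (qc i j) (deriv (qc i j) (φ t i j)) (φ t i j) :=
        (((hqc i j).differentiable one_ne_zero) (φ t i j)).hasDerivAt
      exact hd.comp t (hφ t i j hj)
    have := ((h1.fun_add h2).fun_add h3).fun_sub h4
    exact this.congr_deriv (by ring)
  have hconst := is_const_of_deriv_eq_zero (f := F)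
    (fun t => (key t).differentiableAt) (fun t => (key t).deriv) t₁ t₂
  exact hconst
end

section
/- Let φˢ(t) solve the reduced-order system C_i φ̇ˢ_i = −(G_i+G_{ai}) φˢ_i − q̂_i(φˢ_i) + Σ_{j∈C_i} q̂_{ij}(φˢ_j + φ_{ij0} − φˢ_{j0}) + Q_{i0}. Define v_i(t) = φ̇ˢ_i(t) and φ_{ij}(t) = φˢ_j(t) − φˢ_{j0} + φ_{ij0}. Then (v(t), φˢ(t), φ(t)) is a solution of the full MNN system C_i v̇_i = −(G_i+G_{ai}) v_i − q̂'_i(φˢ_i) v_i + Σ_{j∈C_i} q̂'_{ij}(φ_{ij}) v_j, φ̇ˢ_i = v_i, φ̇_{ij} = v_j. -/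
theorem stmt_3 (n : ℕ) (C G Ga : Fin n → ℝ) (hC : ∀ i, 0 < C i)
    (Cset : Fin n → Finset (Fin n)) (hCset : ∀ i, i ∉ Cset i)
    (qs : Fin n → ℝ → ℝ) (qc : Fin n → Fin n → ℝ → ℝ)
    (hqs : ∀ i, ContDiff ℝ 1 (qs i)) (hqc : ∀ i j, ContDiff ℝ 1 (qc i j))
    (φs0 : Fin n → ℝ) (φij0 : Fin n → Fin n → ℝ) (Q0 : Fin n → ℝ)
    (φs : ℝ → Fin n → ℝ) (hinit : φs 0 = φs0)
    (hred : ∀ t i, HasDerivAt (fun t => φs t i)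
      ((1 / C i) * (-(G i + Ga i) * φs t i - qs i (φs t i) +
        ∑ j ∈ Cset i, qc i j (φs t j + φij0 i j - φs0 j) + Q0 i)) t)
    (v : ℝ → Fin n → ℝ)
    (hvdef : ∀ t i, v t i = (1 / C i) * (-(G i + Ga i) * φs t i - qs i (φs t i) +
        ∑ j ∈ Cset i, qc i j (φs t j + φij0 i j - φs0 j) + Q0 i))
    (φ : ℝ → Fin n → Fin n → ℝ)
    (hφdef : ∀ t i j, φ t i j = φs t j - φs0 j + φij0 i j) :
    (∀ t i, HasDerivAt (fun t => v t i)
      ((1 / C i) * (-(G i + Ga i) * v t i - deriv (qs i) (φs t i) * v t i +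
        ∑ j ∈ Cset i, deriv (qc i j) (φ t i j) * v t j)) t) ∧
    (∀ t i, HasDerivAt (fun t => φs t i) (v t i) t) ∧
    (∀ t i j, HasDerivAt (fun t => φ t i j) (v t j) t) := by
  have hφs' : ∀ t i, HasDerivAt (fun t => φs t i) (v t i) t := by
    intro t i
    rw [hvdef]
    exact hred t i
  refine ⟨?_, hφs', ?_⟩
  · intro t i
    have hfun : (fun t => v t i) = (fun t => (1 / C i) * (-(G i + Ga i) * φs t i -
        qs i (φs t i) + ∑ j ∈ Cset i, qc i j (φs t j + φij0 i j - φs0 j) + Q0 i)) :=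
      funext fun t => hvdef t i
    rw [hfun]
    have h1 : HasDerivAt (fun t => -(G i + Ga i) * φs t i) (-(G i + Ga i) * v t i) t :=
      (hφs' t i).const_mul _
    have h2 : HasDerivAt (fun t => qs i (φs t i)) (deriv (qs i) (φs t i) * v t i) t :=
      (((hqs i).differentiable one_ne_zero) (φs t i)).hasDerivAt.comp t (hφs' t i)
    have h3 : HasDerivAt (fun t => ∑ j ∈ Cset i, qc i j (φs t j + φij0 i j - φs0 j))
        (∑ j ∈ Cset i, deriv (qc i j) (φ t i j) * v t j) t := by
      refine HasDerivAt.fun_sum fun j _ => ?_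
      have harg : φs t j + φij0 i j - φs0 j = φ t i j := by rw [hφdef]; ring
      have hin : HasDerivAt (fun t => φs t j + φij0 i j - φs0 j) (v t j) t :=
        ((hφs' t j).add_const _).sub_const _
      have := (((hqc i j).differentiable one_ne_zero) (φs t j + φij0 i j - φs0 j)).hasDerivAt.comp t hin
      rwa [harg] at this
    exact (((h1.sub h2).add h3).add_const (Q0 i)).const_mul _
  · intro t i j
    have hfun : (fun t => φ t i j) = (fun t => φs t j - φs0 j + φij0 i j) :=
      funext fun t => hφdef t i j
    rw [hfun]
    exact ((hφs' t j).sub_const _).add_const _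
end

section
/- Consider φ̇_i = f_i(φ) = −(G_{ai}+G_i) φ_i − q̂_i(φ_i) + Σ_{j∈C_i} q̂_{ij}(φ_j + c_{ij}) + Q_i on ℝⁿ, where each q̂_i, q̂_{ij} satisfies: C¹, q̂(0)=0, 0 < G_off ≤ q̂' ≤ G_on, with derivative limits G± at ±∞. Assume for each i: min{G_i⁺, G_i⁻} > −(G_{ai}+G_i) + Σ_{j∈C_i} max{G_{ij}⁺, G_{ij}⁻}, where G_i^±, G_{ij}^± are the asymptotic slopes of q̂_i, q̂_{ij}. Then there exists R > 0 such that the closed ball {φ : ‖φ‖_∞ ≤ R} is positively invariant and globally attractive; in particular every solution is bounded and defined for all t ≥ 0. -/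
set_option maxHeartbeats 1000000

open Filter Set Topology

lemma ftc_le' {q : ℝ → ℝ} (hq : ContDiff ℝ 1 q) {a b C : ℝ} (hab : a ≤ b)
    (h : ∀ y ∈ Set.Icc a b, deriv q y ≤ C) : q b - q a ≤ C * (b - a) := by
  have hdc : Continuous (deriv q) := hq.continuous_deriv le_rfl
  have hdiff : Differentiable ℝ q := hq.differentiable one_ne_zero
  have hftc : ∫ y in a..b, deriv q y = q b - q a :=
    intervalIntegral.integral_deriv_eq_sub (fun x _ => hdiff x)
      (hdc.intervalIntegrable a b)
  rw [← hftc]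
  calc ∫ y in a..b, deriv q y ≤ ∫ _y in a..b, C :=
        intervalIntegral.integral_mono_on hab (hdc.intervalIntegrable a b)
          intervalIntegrable_const h
    _ = C * (b - a) := by simp [mul_comm]

lemma ftc_ge' {q : ℝ → ℝ} (hq : ContDiff ℝ 1 q) {a b C : ℝ} (hab : a ≤ b)
    (h : ∀ y ∈ Set.Icc a b, C ≤ deriv q y) : C * (b - a) ≤ q b - q a := by
  have hdc : Continuous (deriv q) := hq.continuous_deriv le_rfl
  have hdiff : Differentiable ℝ q := hq.differentiable one_ne_zero
  have hftc : ∫ y in a..b, deriv q y = q b - q a :=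
    intervalIntegral.integral_deriv_eq_sub (fun x _ => hdiff x)
      (hdc.intervalIntegrable a b)
  rw [← hftc]
  calc C * (b - a) = ∫ _y in a..b, C := by simp [mul_comm]
    _ ≤ ∫ y in a..b, deriv q y :=
        intervalIntegral.integral_mono_on hab intervalIntegrable_const
          (hdc.intervalIntegrable a b) h

lemma memristor_bounds {q : ℝ → ℝ} {Goff Gon Gp Gm : ℝ}
    (hq : ContDiff ℝ 1 q) (h0 : q 0 = 0) (hoff : 0 < Goff)
    (hd : ∀ y, Goff ≤ deriv q y ∧ deriv q y ≤ Gon)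
    (hp : Tendsto (deriv q) atTop (nhds Gp))
    (hm : Tendsto (deriv q) atBot (nhds Gm))
    {ε : ℝ} (hε : 0 < ε) :
    ∃ K, 0 ≤ K ∧ (∀ y, |q y| ≤ (max Gp Gm + ε) * |y| + K) ∧
      (∀ y, 0 ≤ y → (min Gp Gm - ε) * y - K ≤ q y) ∧
      (∀ y, y ≤ 0 → q y ≤ (min Gp Gm - ε) * y + K) := by
  have hGp : Goff ≤ Gp := ge_of_tendsto hp (Eventually.of_forall fun y => (hd y).1)
  have hGm : Goff ≤ Gm := ge_of_tendsto hm (Eventually.of_forall fun y => (hd y).1)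
  have hGon : Goff ≤ Gon := le_trans (hd 0).1 (hd 0).2
  have hGon0 : 0 ≤ Gon := le_trans hoff.le hGon
  obtain ⟨a1, ha1⟩ : ∃ a1, ∀ y ≥ a1, Gp - ε < deriv q y ∧ deriv q y < Gp + ε :=
    eventually_atTop.1 ((hp.eventually_const_lt (by linarith)).and
      (hp.eventually_lt_const (by linarith)))
  obtain ⟨a2, ha2⟩ : ∃ a2, ∀ y ≤ a2, Gm - ε < deriv q y ∧ deriv q y < Gm + ε :=
    eventually_atBot.1 ((hm.eventually_const_lt (by linarith)).and
      (hm.eventually_lt_const (by linarith)))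
  set M1 := max a1 0 with hM1
  set M2 := min a2 0 with hM2
  have hM1nn : 0 ≤ M1 := le_max_right _ _
  have hM2np : M2 ≤ 0 := min_le_right _ _
  set S := min Gp Gm with hS
  set X := max Gp Gm with hX
  have hXpos : 0 < X + ε := by have : Goff ≤ X := le_trans hGp (le_max_left _ _); linarith
  have hT1 : 0 ≤ Gon * M1 := mul_nonneg hGon0 hM1nn
  have hT2 : 0 ≤ Gon * (-M2) := mul_nonneg hGon0 (by linarith)
  have hT3 : 0 ≤ |S - ε| * (M1 - M2) := mul_nonneg (abs_nonneg _) (by linarith)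
  set K := Gon * M1 + Gon * (-M2) + |S - ε| * (M1 - M2) with hK
  have hKnn : 0 ≤ K := by linarith
  have glob_up : ∀ y, 0 ≤ y → q y ≤ Gon * y := fun y hy => by
    have := ftc_le' hq hy (fun z _ => (hd z).2); rw [h0] at this; linarith [this]
  have glob_lo : ∀ y, 0 ≤ y → Goff * y ≤ q y := fun y hy => by
    have := ftc_ge' hq hy (fun z _ => (hd z).1); rw [h0] at this; linarith [this]
  have glob_up' : ∀ y, y ≤ 0 → Gon * y ≤ q y := fun y hy => by
    have := ftc_le' hq hy (fun z _ => (hd z).2); rw [h0] at this; linarith [this]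
  have glob_lo' : ∀ y, y ≤ 0 → q y ≤ Goff * y := fun y hy => by
    have := ftc_ge' hq hy (fun z _ => (hd z).1); rw [h0] at this; linarith [this]
  have tail_up : ∀ y, M1 ≤ y → q y - q M1 ≤ (Gp + ε) * (y - M1) := fun y hy =>
    ftc_le' hq hy (fun z hz => (ha1 z (le_trans (le_max_left a1 0) hz.1)).2.le)
  have tail_lo : ∀ y, M1 ≤ y → (Gp - ε) * (y - M1) ≤ q y - q M1 := fun y hy =>
    ftc_ge' hq hy (fun z hz => (ha1 z (le_trans (le_max_left a1 0) hz.1)).1.le)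
  have tail_up' : ∀ y, y ≤ M2 → q M2 - q y ≤ (Gm + ε) * (M2 - y) := fun y hy =>
    ftc_le' hq hy (fun z hz => (ha2 z (le_trans hz.2 (min_le_left a2 0))).2.le)
  have tail_lo' : ∀ y, y ≤ M2 → (Gm - ε) * (M2 - y) ≤ q M2 - q y := fun y hy =>
    ftc_ge' hq hy (fun z hz => (ha2 z (le_trans hz.2 (min_le_left a2 0))).1.le)
  have hqM1nn : 0 ≤ q M1 := le_trans (mul_nonneg hoff.le hM1nn) (glob_lo M1 hM1nn)
  have hqM1up : q M1 ≤ Gon * M1 := glob_up M1 hM1nn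
  have hqM2np : q M2 ≤ 0 := le_trans (glob_lo' M2 hM2np)
    (mul_nonpos_of_nonneg_of_nonpos hoff.le hM2np)
  have hqM2lo : Gon * M2 ≤ q M2 := glob_up' M2 hM2np
  refine ⟨K, hKnn, ?_, ?_, ?_⟩
  · intro y
    rcases le_total 0 y with hy | hy
    · have hqy : 0 ≤ q y := le_trans (mul_nonneg hoff.le hy) (glob_lo y hy)
      rw [abs_of_nonneg hqy, abs_of_nonneg hy]
      have hXy : 0 ≤ (X + ε) * y := mul_nonneg hXpos.le hy
      rcases le_total y M1 with hy1 | hy1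
      · have h1 := glob_up y hy
        have h2 : Gon * y ≤ Gon * M1 := mul_le_mul_of_nonneg_left hy1 hGon0
        linarith
      · have h1 := tail_up y hy1
        have h2 : (Gp + ε) * (y - M1) ≤ (X + ε) * (y - M1) :=
          mul_le_mul_of_nonneg_right (by have : Gp ≤ X := le_max_left _ _; linarith)
            (by linarith)
        have h4 : 0 ≤ (X + ε) * M1 := mul_nonneg hXpos.le hM1nn
        linarith
    · have hqy : q y ≤ 0 := le_trans (glob_lo' y hy)
        (mul_nonpos_of_nonneg_of_nonpos hoff.le hy)
      rw [abs_of_nonpos hqy, abs_of_nonpos hy]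
      have hXy : 0 ≤ (X + ε) * (-y) := mul_nonneg hXpos.le (by linarith)
      rcases le_total M2 y with hy1 | hy1
      · have h1 := glob_up' y hy
        have h2 : Gon * (-y) ≤ Gon * (-M2) :=
          mul_le_mul_of_nonneg_left (by linarith) hGon0
        linarith
      · have h1 := tail_up' y hy1
        have h2 : (Gm + ε) * (M2 - y) ≤ (X + ε) * (M2 - y) :=
          mul_le_mul_of_nonneg_right (by have : Gm ≤ X := le_max_right _ _; linarith)
            (by linarith)
        have h4 : (X + ε) * M2 ≤ 0 := mul_nonpos_of_nonneg_of_nonpos hXpos.le hM2np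
        linarith
  · intro y hy
    rcases le_total y M1 with hy1 | hy1
    · have hqy : 0 ≤ q y := le_trans (mul_nonneg hoff.le hy) (glob_lo y hy)
      have a1' : (S - ε) * y ≤ |S - ε| * y :=
        mul_le_mul_of_nonneg_right (le_abs_self _) hy
      have b1 : |S - ε| * y ≤ |S - ε| * M1 :=
        mul_le_mul_of_nonneg_left hy1 (abs_nonneg _)
      have c1 : |S - ε| * M1 ≤ |S - ε| * (M1 - M2) :=
        mul_le_mul_of_nonneg_left (by linarith) (abs_nonneg _)
      linarith
    · have h1 := tail_lo y hy1
      have d1 : (S - ε) * (y - M1) ≤ (Gp - ε) * (y - M1) :=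
        mul_le_mul_of_nonneg_right (by have : S ≤ Gp := min_le_left _ _; linarith)
          (by linarith)
      have f1 : (S - ε) * M1 ≤ |S - ε| * M1 :=
        mul_le_mul_of_nonneg_right (le_abs_self _) hM1nn
      have c1 : |S - ε| * M1 ≤ |S - ε| * (M1 - M2) :=
        mul_le_mul_of_nonneg_left (by linarith) (abs_nonneg _)
      linarith
  · intro y hy
    rcases le_total M2 y with hy1 | hy1
    · have hqy : q y ≤ 0 := le_trans (glob_lo' y hy)
        (mul_nonpos_of_nonneg_of_nonpos hoff.le hy)
      have p1 : (S - ε) * (-y) ≤ |S - ε| * (-y) :=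
        mul_le_mul_of_nonneg_right (le_abs_self _) (by linarith)
      have p2 : |S - ε| * (-y) ≤ |S - ε| * (-M2) :=
        mul_le_mul_of_nonneg_left (by linarith) (abs_nonneg _)
      have p3 : |S - ε| * (-M2) ≤ |S - ε| * (M1 - M2) :=
        mul_le_mul_of_nonneg_left (by linarith) (abs_nonneg _)
      linarith
    · have h1 := tail_lo' y hy1
      have g1 : (S - ε) * (M2 - y) ≤ (Gm - ε) * (M2 - y) :=
        mul_le_mul_of_nonneg_right (by have : S ≤ Gm := min_le_right _ _; linarith)
          (by linarith)
      have g2 : (S - ε) * (-M2) ≤ |S - ε| * (-M2) :=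
        mul_le_mul_of_nonneg_right (le_abs_self _) (by linarith)
      have g3 : |S - ε| * (-M2) ≤ |S - ε| * (M1 - M2) :=
        mul_le_mul_of_nonneg_left (by linarith) (abs_nonneg _)
      linarith

lemma max_norm_decay {n : ℕ} (hn : 0 < n) (x v : ℝ → Fin n → ℝ)
    (hx : ∀ t i, HasDerivAt (fun t => x t i) (v t i) t)
    (R : ℝ) (hR : 1 ≤ R)
    (key : ∀ t i, R ≤ ‖x t‖ →
      (x t i = ‖x t‖ → v t i ≤ -2) ∧ (x t i = -‖x t‖ → 2 ≤ v t i)) :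
    (∀ a, ‖x a‖ ≤ R → ∀ t, a ≤ t → ‖x t‖ ≤ R) ∧
      (∃ T, 0 ≤ T ∧ ∀ t, T ≤ t → ‖x t‖ ≤ R) := by
  haveI : NeZero n := ⟨hn.ne'⟩
  set g : Fin n × Bool → ℝ → ℝ := fun p t => if p.2 then x t p.1 else -(x t p.1) with hgdef
  set d : Fin n × Bool → ℝ → ℝ := fun p t => if p.2 then v t p.1 else -(v t p.1) with hddef
  have eg1 : ∀ t i, g (i, true) t = x t i := fun t i => by simp [hgdef]
  have eg2 : ∀ t i, g (i, false) t = -(x t i) := fun t i => by simp [hgdef]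
  have ed1 : ∀ t i, d (i, true) t = v t i := fun t i => by simp [hddef]
  have ed2 : ∀ t i, d (i, false) t = -(v t i) := fun t i => by simp [hddef]
  have hg : ∀ p t, HasDerivAt (g p) (d p t) t := by
    rintro ⟨i, b⟩ t
    cases b
    · rw [ed2]
      have h2 : g (i, false) = fun s => -(x s i) := funext fun s => eg2 s i
      rw [h2]
      exact (hx t i).neg
    · rw [ed1]
      have h2 : g (i, true) = fun s => x s i := funext fun s => eg1 s i
      rw [h2]
      exact hx t i
  have uNE : (Finset.univ : Finset (Fin n × Bool)).Nonempty := Finset.univ_nonempty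
  have gle : ∀ t (p : Fin n × Bool), g p t ≤ ‖x t‖ := by
    rintro t ⟨i, b⟩
    have habs : |x t i| ≤ ‖x t‖ := by
      simpa [Real.norm_eq_abs] using norm_le_pi_norm (x t) i
    cases b
    · rw [eg2]; linarith [neg_le_abs (x t i)]
    · rw [eg1]; linarith [le_abs_self (x t i)]
  have norm_eq : ∀ t, ‖x t‖ = Finset.univ.sup' uNE (fun p => g p t) := by
    intro t
    apply le_antisymm
    · have h1 : g (⟨0, hn⟩, true) t ≤ Finset.univ.sup' uNE (fun p => g p t) :=
        Finset.le_sup' (fun p => g p t) (Finset.mem_univ _)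
      have h2 : g (⟨0, hn⟩, false) t ≤ Finset.univ.sup' uNE (fun p => g p t) :=
        Finset.le_sup' (fun p => g p t) (Finset.mem_univ _)
      rw [eg1] at h1; rw [eg2] at h2
      have hnn : 0 ≤ Finset.univ.sup' uNE (fun p => g p t) := by linarith
      rw [pi_norm_le_iff_of_nonneg hnn]
      intro i
      have k1 : g (i, true) t ≤ Finset.univ.sup' uNE (fun p => g p t) :=
        Finset.le_sup' (fun p => g p t) (Finset.mem_univ _)
      have k2 : g (i, false) t ≤ Finset.univ.sup' uNE (fun p => g p t) :=
        Finset.le_sup' (fun p => g p t) (Finset.mem_univ _)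
      rw [eg1] at k1; rw [eg2] at k2
      rw [Real.norm_eq_abs, abs_le]
      exact ⟨by linarith, k1⟩
    · exact Finset.sup'_le _ _ (fun p _ => gle t p)
  have hKne : ∀ t, (Finset.univ.filter (fun p => g p t = ‖x t‖)).Nonempty := by
    intro t
    obtain ⟨p, hp, hsup⟩ := Finset.exists_mem_eq_sup' uNE (fun p => g p t)
    exact ⟨p, Finset.mem_filter.2 ⟨hp, ((norm_eq t).trans hsup).symm⟩⟩
  set D : ℝ → ℝ := fun t =>
    (Finset.univ.filter (fun p => g p t = ‖x t‖)).sup' (hKne t) (fun p => d p t) with hDdef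
  have hfrk : ∀ t r, D t < r → ∃ᶠ z in 𝓝[>] t, slope (fun s => ‖x s‖) t z < r := by
    intro t r hr
    have hev : ∀ p : Fin n × Bool, ∀ᶠ z in 𝓝[>] t, g p z < ‖x t‖ + r * (z - t) := by
      intro p
      by_cases hp : p ∈ Finset.univ.filter (fun p => g p t = ‖x t‖)
      · have hgt : g p t = ‖x t‖ := (Finset.mem_filter.1 hp).2
        have hdp : d p t < r := lt_of_le_of_lt (Finset.le_sup' (fun p => d p t) hp) hr
        have hslope : ∀ᶠ z in 𝓝[≠] t, slope (g p) t z < r :=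
          (hasDerivAt_iff_tendsto_slope.1 (hg p t)).eventually_lt_const hdp
        have h2 : ∀ᶠ z in 𝓝[>] t, slope (g p) t z < r :=
          nhdsWithin_mono t (fun z hz => Set.mem_compl_singleton_iff.mpr (ne_of_gt hz)) hslope
        filter_upwards [h2, self_mem_nhdsWithin] with z hz1 hz2
        have hz2' : t < z := hz2
        rw [slope_def_field, div_lt_iff₀ (by linarith)] at hz1
        nlinarith [hz1]
      · have hlt : g p t < ‖x t‖ :=
          lt_of_le_of_ne (gle t p) (by simpa using hp)
        have hc : ContinuousAt (fun z => g p z - r * (z - t)) t :=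
          ((hg p t).continuousAt).sub (by fun_prop)
        have hval : (fun z => g p z - r * (z - t)) t < ‖x t‖ := by simpa using hlt
        have hev0 : ∀ᶠ z in 𝓝 t, g p z - r * (z - t) < ‖x t‖ :=
          hc.eventually_lt_const hval
        filter_upwards [nhdsWithin_le_nhds hev0] with z hz
        linarith
    have hall : ∀ᶠ z in 𝓝[>] t,
        ∀ p ∈ (Finset.univ : Finset (Fin n × Bool)), g p z < ‖x t‖ + r * (z - t) :=
      (Finset.eventually_all (I := Finset.univ)).2 (fun p _ => hev p)
    apply Eventually.frequently
    filter_upwards [hall, self_mem_nhdsWithin] with z hz hz2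
    have hz2' : t < z := hz2
    have hlt : ‖x z‖ < ‖x t‖ + r * (z - t) := by
      rw [norm_eq z]
      exact (Finset.sup'_lt_iff _).2 (fun p hp => hz p hp)
    rw [slope_def_field, div_lt_iff₀ (by linarith)]
    linarith
  have hDle : ∀ t, R ≤ ‖x t‖ → D t ≤ -2 := by
    intro t ht
    apply Finset.sup'_le
    rintro ⟨i, b⟩ hp
    have hp' := (Finset.mem_filter.1 hp).2
    cases b
    · rw [eg2] at hp'
      rw [ed2]
      have := (key t i ht).2 (by linarith)
      linarith
    · rw [eg1] at hp'
      rw [ed1]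
      exact (key t i ht).1 hp'
  have hcontm : Continuous fun t => ‖x t‖ := by
    have hdiff : ∀ i, Differentiable ℝ (fun t => x t i) := fun i t => (hx t i).differentiableAt
    have : Continuous fun t => x t := continuous_pi (fun i => (hdiff i).continuous)
    exact this.norm
  have inv : ∀ a, ‖x a‖ ≤ R → ∀ t, a ≤ t → ‖x t‖ ≤ R := by
    intro a ha t hat
    have := image_le_of_liminf_slope_right_lt_deriv_boundary'
      (f := fun s => ‖x s‖) (f' := D) (a := a) (b := t) (B := fun _ => R) (B' := fun _ => 0)
      hcontm.continuousOn (fun s _ r hr => hfrk s r hr) ha continuousOn_const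
      (fun s _ => hasDerivWithinAt_const s _ R)
      (fun s _ hs => lt_of_le_of_lt (hDle s (le_of_eq hs.symm)) (by norm_num))
    exact this (right_mem_Icc.2 hat)
  refine ⟨inv, ?_⟩
  by_cases hex : ∃ s, 0 ≤ s ∧ ‖x s‖ ≤ R
  · obtain ⟨s, hs0, hsR⟩ := hex
    exact ⟨s, hs0, fun t ht => inv s hsR t ht⟩
  · exfalso
    push_neg at hex
    set b := ‖x 0‖ with hb0
    have hb : R < b := hex 0 le_rfl
    have hbpos : 0 ≤ b := by linarith
    have happ := image_le_of_liminf_slope_right_lt_deriv_boundary'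
      (f := fun s => ‖x s‖) (f' := D) (a := 0) (b := b) (B := fun s => b - s)
      (B' := fun _ => -1)
      hcontm.continuousOn (fun s _ r hr => hfrk s r hr) (by simp [hb0])
      (Continuous.continuousOn (by fun_prop))
      (fun s _ => (hasDerivWithinAt_id s (Ici s)).const_sub b)
      (fun s hs hcontact => by
        show D s < -1
        have h1 : R < ‖x s‖ := hex s hs.1
        have := hDle s h1.le
        linarith)
    have hfinal : ‖x b‖ ≤ b - b := happ (right_mem_Icc.2 hbpos)
    have : R < ‖x b‖ := hex b hbpos
    linarith

theorem stmt_13 (n : ℕ) (G Ga : Fin n → ℝ)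
    (Cset : Fin n → Finset (Fin n)) (hCset : ∀ i, i ∉ Cset i)
    (qs : Fin n → ℝ → ℝ) (qc : Fin n → Fin n → ℝ → ℝ)
    (c : Fin n → Fin n → ℝ) (Q : Fin n → ℝ)
    -- Assumption 1 for the self-connection memristors
    (Gsoff Gson : Fin n → ℝ) (Gsp Gsm : Fin n → ℝ)
    (hqs : ∀ i, ContDiff ℝ 1 (qs i)) (hqs0 : ∀ i, qs i 0 = 0)
    (hqsoff : ∀ i, 0 < Gsoff i)
    (hqs' : ∀ i φ, Gsoff i ≤ deriv (qs i) φ ∧ deriv (qs i) φ ≤ Gson i)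
    (hqsp : ∀ i, Tendsto (deriv (qs i)) atTop (nhds (Gsp i)))
    (hqsm : ∀ i, Tendsto (deriv (qs i)) atBot (nhds (Gsm i)))
    -- Assumption 1 for the interconnection memristors
    (Gcoff Gcon : Fin n → Fin n → ℝ) (Gcp Gcm : Fin n → Fin n → ℝ)
    (hqc : ∀ i j, ContDiff ℝ 1 (qc i j)) (hqc0 : ∀ i j, qc i j 0 = 0)
    (hqcoff : ∀ i j, 0 < Gcoff i j)
    (hqc' : ∀ i j φ, Gcoff i j ≤ deriv (qc i j) φ ∧ deriv (qc i j) φ ≤ Gcon i j)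
    (hqcp : ∀ i j, Tendsto (deriv (qc i j)) atTop (nhds (Gcp i j)))
    (hqcm : ∀ i j, Tendsto (deriv (qc i j)) atBot (nhds (Gcm i j)))
    -- condition (4)
    (hcond : ∀ i, min (Gsp i) (Gsm i) >
      -(Ga i + G i) + ∑ j ∈ Cset i, max (Gcp i j) (Gcm i j))
    (f : (Fin n → ℝ) → Fin n → ℝ)
    (hf : ∀ x i, f x i = -(Ga i + G i) * x i - qs i (x i) +
      ∑ j ∈ Cset i, qc i j (x j + c i j) + Q i) :
    ∃ R > (0 : ℝ),
      ∀ x : ℝ → Fin n → ℝ,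
        (∀ t i, HasDerivAt (fun t => x t i) (f (x t) i) t) →
        ((‖x 0‖ ≤ R → ∀ t ≥ (0 : ℝ), ‖x t‖ ≤ R) ∧
         ∃ T ≥ (0 : ℝ), ∀ t ≥ T, ‖x t‖ ≤ R) := by
  rcases Nat.eq_zero_or_pos n with hn | hn
  · subst hn
    refine ⟨1, one_pos, fun x _ => ?_⟩
    have hz : ∀ t : ℝ, ‖x t‖ ≤ 1 := by
      intro t
      have h0 : x t = 0 := Subsingleton.elim _ _
      rw [h0, norm_zero]
      exact zero_le_one
    exact ⟨fun _ t _ => hz t, ⟨0, le_rfl, fun t _ => hz t⟩⟩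
  -- main case
  set θ : Fin n → ℝ := fun i =>
    Ga i + G i + min (Gsp i) (Gsm i) - ∑ j ∈ Cset i, max (Gcp i j) (Gcm i j) with hθdef
  have hθpos : ∀ i, 0 < θ i := fun i => by have := hcond i; rw [hθdef]; dsimp only; linarith
  set ε : Fin n → ℝ := fun i => θ i / (2 * ((Cset i).card + 1)) with hεdef
  have hεpos : ∀ i, 0 < ε i := fun i => div_pos (hθpos i) (by positivity)
  choose Ks hKs0 hKsA hKs2 hKs3 using fun i =>
    memristor_bounds (hqs i) (hqs0 i) (hqsoff i) (hqs' i) (hqsp i) (hqsm i) (hεpos i)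
  choose Kc hKc0 hKcA hKcB hKcC using fun i j =>
    memristor_bounds (hqc i j) (hqc0 i j) (hqcoff i j) (hqc' i j) (hqcp i j) (hqcm i j) (hεpos i)
  have hGcp_pos : ∀ i j, 0 < Gcp i j := fun i j =>
    lt_of_lt_of_le (hqcoff i j)
      (ge_of_tendsto (hqcp i j) (Eventually.of_forall fun y => (hqc' i j y).1))
  set C : Fin n → ℝ := fun i =>
    Ks i + (∑ j ∈ Cset i, ((max (Gcp i j) (Gcm i j) + ε i) * |c i j| + Kc i j)) + |Q i|
    with hCdef
  set R0 : Fin n → ℝ := fun i => max 1 (2 * (C i + 2) / θ i) with hR0def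
  set R : ℝ := 1 + ∑ i : Fin n, R0 i with hRdef
  have hR0ge1 : ∀ i, 1 ≤ R0 i := fun i => le_max_left _ _
  have hR1 : 1 ≤ R := by
    have : (0:ℝ) ≤ ∑ i : Fin n, R0 i :=
      Finset.sum_nonneg (fun i _ => le_trans zero_le_one (hR0ge1 i))
    rw [hRdef]; linarith
  have hRi : ∀ i, R0 i ≤ R := fun i => by
    have h := Finset.single_le_sum (f := R0)
      (fun j _ => le_trans zero_le_one (hR0ge1 j)) (Finset.mem_univ i)
    rw [hRdef]; linarith
  have keyi : ∀ (φ : Fin n → ℝ) i, R ≤ ‖φ‖ →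
      ((φ i = ‖φ‖ → f φ i ≤ -2) ∧ (φ i = -‖φ‖ → 2 ≤ f φ i)) := by
    intro φ i hφR
    have hm0 : (0:ℝ) ≤ ‖φ‖ := norm_nonneg φ
    have hmRi : 2 * (C i + 2) / θ i ≤ ‖φ‖ :=
      le_trans (le_trans (le_max_right _ _) (hRi i)) hφR
    have hmain : 2 * (C i + 2) ≤ θ i * ‖φ‖ := by
      rw [div_le_iff₀ (hθpos i)] at hmRi
      linarith
    have hεeq : (((Cset i).card : ℝ) + 1) * ε i = θ i / 2 := by
      rw [hεdef]
      have h2 : (2 * (((Cset i).card : ℝ) + 1)) ≠ 0 := by positivity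
      field_simp
    have hεm : (((Cset i).card : ℝ) + 1) * ε i * ‖φ‖ = (θ i / 2) * ‖φ‖ := by rw [hεeq]
    -- bounds on interconnection terms
    have hterm : ∀ j ∈ Cset i, |qc i j (φ j + c i j)| ≤
        (max (Gcp i j) (Gcm i j) + ε i) * ‖φ‖ +
          ((max (Gcp i j) (Gcm i j) + ε i) * |c i j| + Kc i j) := by
      intro j _
      have h1 := hKcA i j (φ j + c i j)
      have habs : |φ j + c i j| ≤ ‖φ‖ + |c i j| := by
        have h3 : |φ j| ≤ ‖φ‖ := by
          simpa [Real.norm_eq_abs] using norm_le_pi_norm φ j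
        calc |φ j + c i j| ≤ |φ j| + |c i j| := abs_add_le _ _
          _ ≤ ‖φ‖ + |c i j| := by linarith
      have hpos : 0 < max (Gcp i j) (Gcm i j) + ε i := by
        have := hGcp_pos i j
        have := le_max_left (Gcp i j) (Gcm i j)
        have := hεpos i
        linarith
      have h2 : (max (Gcp i j) (Gcm i j) + ε i) * |φ j + c i j| ≤
          (max (Gcp i j) (Gcm i j) + ε i) * (‖φ‖ + |c i j|) :=
        mul_le_mul_of_nonneg_left habs hpos.le
      nlinarith [h1, h2]
    have Ee : ∑ j ∈ Cset i, ((max (Gcp i j) (Gcm i j) + ε i) * ‖φ‖ +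
          ((max (Gcp i j) (Gcm i j) + ε i) * |c i j| + Kc i j)) =
        (∑ j ∈ Cset i, max (Gcp i j) (Gcm i j)) * ‖φ‖ +
          ((Cset i).card : ℝ) * ε i * ‖φ‖ +
          (∑ j ∈ Cset i, ((max (Gcp i j) (Gcm i j) + ε i) * |c i j| + Kc i j)) := by
      rw [Finset.sum_add_distrib, ← Finset.sum_mul, Finset.sum_add_distrib,
        Finset.sum_const, nsmul_eq_mul]
      ring
    have hsum_up : ∑ j ∈ Cset i, qc i j (φ j + c i j) ≤
        (∑ j ∈ Cset i, max (Gcp i j) (Gcm i j)) * ‖φ‖ +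
          ((Cset i).card : ℝ) * ε i * ‖φ‖ +
          (∑ j ∈ Cset i, ((max (Gcp i j) (Gcm i j) + ε i) * |c i j| + Kc i j)) :=
      le_trans (Finset.sum_le_sum (fun j hj => le_trans (le_abs_self _) (hterm j hj)))
        (le_of_eq Ee)
    have hsum_lo : -((∑ j ∈ Cset i, max (Gcp i j) (Gcm i j)) * ‖φ‖ +
          ((Cset i).card : ℝ) * ε i * ‖φ‖ +
          (∑ j ∈ Cset i, ((max (Gcp i j) (Gcm i j) + ε i) * |c i j| + Kc i j))) ≤
        ∑ j ∈ Cset i, qc i j (φ j + c i j) := by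
      have h := Finset.sum_le_sum (f := fun j => -((max (Gcp i j) (Gcm i j) + ε i) * ‖φ‖ +
              ((max (Gcp i j) (Gcm i j) + ε i) * |c i j| + Kc i j)))
          (g := fun j => qc i j (φ j + c i j)) (s := Cset i)
          (fun j hj => by
            have h1 := hterm j hj
            have h2 := neg_abs_le (qc i j (φ j + c i j))
            linarith)
      rw [← Ee, ← Finset.sum_neg_distrib]
      exact h
    have hθexp : θ i = Ga i + G i + min (Gsp i) (Gsm i) -
        ∑ j ∈ Cset i, max (Gcp i j) (Gcm i j) := by rw [hθdef]
    have hCexp : C i = Ks i +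
        (∑ j ∈ Cset i, ((max (Gcp i j) (Gcm i j) + ε i) * |c i j| + Kc i j)) + |Q i| := by
      rw [hCdef]
    have hθm : θ i * ‖φ‖ = (Ga i + G i) * ‖φ‖ + (min (Gsp i) (Gsm i)) * ‖φ‖ -
        (∑ j ∈ Cset i, max (Gcp i j) (Gcm i j)) * ‖φ‖ := by rw [hθexp]; ring
    have hQ1 : Q i ≤ |Q i| := le_abs_self _
    have hQ2 : -|Q i| ≤ Q i := neg_abs_le _
    constructor
    · intro hφ
      have h1 : (min (Gsp i) (Gsm i) - ε i) * ‖φ‖ - Ks i ≤ qs i ‖φ‖ := hKs2 i ‖φ‖ hm0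
      have h3 : f φ i = -(Ga i + G i) * ‖φ‖ - qs i ‖φ‖ +
          ∑ j ∈ Cset i, qc i j (φ j + c i j) + Q i := by rw [hf φ i, hφ]
      rw [h3]
      linarith [hsum_up, hmain, hεm, hθm]
    · intro hφ
      have h1 : qs i (-‖φ‖) ≤ (min (Gsp i) (Gsm i) - ε i) * (-‖φ‖) + Ks i :=
        hKs3 i (-‖φ‖) (by linarith)
      have h3 : f φ i = -(Ga i + G i) * (-‖φ‖) - qs i (-‖φ‖) +
          ∑ j ∈ Cset i, qc i j (φ j + c i j) + Q i := by rw [hf φ i, hφ]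
      rw [h3]
      linarith [hsum_lo, hmain, hεm, hθm]
  refine ⟨R, by linarith, fun x hx => ?_⟩
  obtain ⟨inv, T, hT0, hT⟩ := max_norm_decay hn x (fun t => f (x t)) hx R hR1
    (fun t i h => keyi (x t) i h)
  exact ⟨fun h0 t ht => inv 0 h0 t ht, ⟨T, hT0, fun t ht => hT t ht⟩⟩
end
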